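/- Suppose a sequence s = s_0 s_1 … s_{n+⌈log₂ m⌉} ∈ {0,1}^{n+1+⌈log₂ m⌉} satisfies occ_root^G(s) = m. Then the boolean assignment defined by x_j := s_{j+⌈log₂ m⌉} for j = 1,…,n satisfies every clause c_1(x),…,c_m(x). -/

import Mathlib

namespace GraphDB

/-- Vertices of the graph `G` produced by the SAT reduction.
`node k p` is the vertex of the binary tree at depth `k` and position `p`
(in heap-style ordering); in particular `node 0 0` is the root and, with
`d = ⌈log₂ m⌉`, the leaf `node d (i-1)` is the clause vertex `c_i`.
`u i j` and `v i j` are the vertices `u_i^j` and `v_i^j` (with `i = 0`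
giving `u_0^j`, `v_0^j`). -/
inductive Vtx : Type
  | node (k p : ℕ)
  | u (i j : ℕ)
  | v (i j : ℕ)
  deriving DecidableEq

/-- The edge relation of the graph `G` obtained from the SAT instance with
`n` variables `x_1, …, x_n` and `m` clauses `c_1, …, c_m`, where
`c i j = some true` means that the literal `x_j` occurs in clause `c_i`,
`c i j = some false` means that the literal `¬x_j` occurs in `c_i`, and
`c i j = none` means that the variable `x_j` does not occur in `c_i`. -/
def Edge (n m : ℕ) (c : ℕ → ℕ → Option Bool) : Vtx → Vtx → Prop := fun a b =>
  match a, b with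
  | .node k p, .node k' q =>
      k' = k + 1 ∧ k' ≤ Nat.clog 2 m ∧ (q = 2 * p ∨ q = 2 * p + 1) ∧
        q * 2 ^ (Nat.clog 2 m - k') < m
  | .node k p, .u i j => k = Nat.clog 2 m ∧ p < m ∧ i = p + 1 ∧ j = 1
  | .node k p, .v i j => k = Nat.clog 2 m ∧ p < m ∧ i = p + 1 ∧ j = 1
  | .u i j, .u i' j' =>
      j' = j + 1 ∧
        ((i = 0 ∧ i' = 0 ∧ 2 ≤ j ∧ j + 1 ≤ n) ∨
         (1 ≤ i ∧ i ≤ m ∧ i' = 0 ∧ 1 ≤ j ∧ j + 1 ≤ n ∧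
            (c i j = some true ∨ (j + 1 = n ∧ c i n = some true))) ∨
         (1 ≤ i ∧ i ≤ m ∧ i' = i ∧ 1 ≤ j ∧ j + 2 ≤ n ∧ c i j ≠ some true))
  | .u i j, .v i' j' =>
      j' = j + 1 ∧
        ((i = 0 ∧ i' = 0 ∧ 2 ≤ j ∧ j + 1 ≤ n) ∨
         (1 ≤ i ∧ i ≤ m ∧ i' = 0 ∧ 1 ≤ j ∧ j + 1 ≤ n ∧
            (c i j = some true ∨ (j + 1 = n ∧ c i n = some false))) ∨
         (1 ≤ i ∧ i ≤ m ∧ i' = i ∧ 1 ≤ j ∧ j + 2 ≤ n ∧ c i j ≠ some true))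
  | .v i j, .u i' j' =>
      j' = j + 1 ∧
        ((i = 0 ∧ i' = 0 ∧ 2 ≤ j ∧ j + 1 ≤ n) ∨
         (1 ≤ i ∧ i ≤ m ∧ i' = 0 ∧ 1 ≤ j ∧ j + 1 ≤ n ∧
            (c i j = some false ∨ (j + 1 = n ∧ c i n = some true))) ∨
         (1 ≤ i ∧ i ≤ m ∧ i' = i ∧ 1 ≤ j ∧ j + 2 ≤ n ∧ c i j ≠ some false))
  | .v i j, .v i' j' =>
      j' = j + 1 ∧
        ((i = 0 ∧ i' = 0 ∧ 2 ≤ j ∧ j + 1 ≤ n) ∨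
         (1 ≤ i ∧ i ≤ m ∧ i' = 0 ∧ 1 ≤ j ∧ j + 1 ≤ n ∧
            (c i j = some false ∨ (j + 1 = n ∧ c i n = some false))) ∨
         (1 ≤ i ∧ i ≤ m ∧ i' = i ∧ 1 ≤ j ∧ j + 2 ≤ n ∧ c i j ≠ some false))
  | _, _ => False

/-- The vertex labeling `ℓ` of `G`: the vertices `v_i^j` are labeled `0`
(`false`), all other vertices are labeled `1` (`true`). -/
def lab : Vtx → Bool
  | .v _ _ => false
  | _ => true

/-- The starting vertex `root` of `G`. -/
def root : Vtx := .node 0 0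

/-- `occG n m c a t` is `occ_a^G(t)`: the number of walks `w_1 w_2 … w_k`
in `G` with `w_1 = a` and `ℓ(w_j) = t_j` for all `j ∈ {1, …, k}`. -/
noncomputable def occG (n m : ℕ) (c : ℕ → ℕ → Option Bool) (a : Vtx) (t : List Bool) : ℕ :=
  Set.ncard {w : List Vtx | List.Chain' (Edge n m c) w ∧ w.head? = some a ∧ w.map lab = t}

end GraphDB

namespace GraphDB

theorem chain'_rel {α} {R : α → α → Prop} {w : List α} (h : w.Chain' R) {k : ℕ} {a b : α}
    (ha : w[k]? = some a) (hb : w[k+1]? = some b) : R a b := by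
  have hk1 : k + 1 < w.length := by
    by_contra hc
    simp [List.getElem?_eq_none (Nat.le_of_not_lt hc)] at hb
  have hk : k < w.length - 1 := by omega
  have := List.isChain_iff_getElem.mp h k (by omega)
  rw [List.getElem?_eq_getElem (by omega)] at ha
  rw [List.getElem?_eq_getElem hk1] at hb
  rw [Option.some_inj] at ha hb
  rwa [ha, hb] at this

/-- Row tracker: which row (0 or i) the canonical walk of clause i is in at level j. -/
def rowF (c : ℕ → ℕ → Option Bool) (b : ℕ → Bool) (i : ℕ) : ℕ → ℕ
  | 0 => i
  | j + 1 => if j = 0 then i else if c i j = some (b j) then 0 else rowF c b i j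

/-- Helper picking `u` or `v` according to a label. -/
def uv (b : Bool) (r j : ℕ) : Vtx := if b then .u r j else .v r j

theorem lab_uv (b : Bool) (r j : ℕ) : lab (uv b r j) = b := by
  cases b <;> simp [uv, lab]

theorem rowF_cases (c : ℕ → ℕ → Option Bool) (b : ℕ → Bool) (i j : ℕ) :
    rowF c b i j = 0 ∨ rowF c b i j = i := by
  induction j with
  | zero => right; rfl
  | succ j ih =>
    rw [rowF]
    split
    · right; rfl
    · split
      · left; rfl
      · exact ih

theorem rowF_eq_zero (c : ℕ → ℕ → Option Bool) (b : ℕ → Bool) (i : ℕ) (hi : 1 ≤ i) :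
    ∀ j, rowF c b i j = 0 → 2 ≤ j ∧ ∃ j', 1 ≤ j' ∧ j' < j ∧ c i j' = some (b j') := by
  intro j
  induction j with
  | zero => intro h; rw [rowF] at h; omega
  | succ j ih =>
    intro h
    rw [rowF] at h
    split at h
    · omega
    · split at h
      · refine ⟨by omega, j, by omega, by omega, by assumption⟩
      · obtain ⟨h2, j', hj'⟩ := ih h
        exact ⟨by omega, j', by omega, by omega, hj'.2.2⟩

theorem rowF_succ_of_ne_zero (c : ℕ → ℕ → Option Bool) (b : ℕ → Bool) (i j : ℕ) (hj : 1 ≤ j) :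
    rowF c b i (j + 1) = if c i j = some (b j) then 0 else rowF c b i j := by
  rw [rowF]; split
  · omega
  · rfl

end GraphDB

namespace GraphDB

theorem walk_struct (n m : ℕ) (hn : 2 ≤ n) (hm : 1 ≤ m) (c : ℕ → ℕ → Option Bool)
    (s : List Bool) (hlen : s.length = n + 1 + Nat.clog 2 m)
    (w : List Vtx) (hch : w.Chain' (Edge n m c)) (hhead : w.head? = some root)
    (hmap : w.map lab = s) :
    ∃ p, p < m ∧
      (∀ k, k ≤ Nat.clog 2 m →
        w[k]? = some (.node k (p / 2 ^ (Nat.clog 2 m - k)))) ∧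
      (∀ j, 1 ≤ j → j ≤ n - 1 →
        w[Nat.clog 2 m + j]? =
          some (uv (s.getD (Nat.clog 2 m + j) true)
            (rowF c (fun j' => s.getD (Nat.clog 2 m + j') true) (p + 1) j) j)) ∧
      w[Nat.clog 2 m + n]? = some (uv (s.getD (Nat.clog 2 m + n) true) 0 n) ∧
      (∃ j, 1 ≤ j ∧ j ≤ n ∧
        c (p + 1) j = some (s.getD (Nat.clog 2 m + j) true)) := by
  set d := Nat.clog 2 m with hd
  set b : ℕ → Bool := fun j' => s.getD (d + j') true with hb
  have hlenw : w.length = n + 1 + d := by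
    rw [← hlen, ← hmap, List.length_map]
  have hlab : ∀ k : ℕ, (w[k]?).map lab = s[k]? := by
    intro k; rw [← hmap]; exact (List.getElem?_map ..).symm
  have hEdge : ∀ {k : ℕ} {a x : Vtx}, w[k]? = some a → w[k + 1]? = some x →
      Edge n m c a x := fun ha hx => chain'_rel hch ha hx
  have hsome : ∀ k, k < n + 1 + d → ∃ x, w[k]? = some x := by
    intro k hk
    exact ⟨w[k]'(by omega), List.getElem?_eq_getElem (by omega)⟩
  have hbit : ∀ k, ∀ x : Vtx, w[k]? = some x → lab x = s.getD k true := by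
    intro k x hx
    have h := hlab k
    rw [hx] at h
    rw [List.getD_eq_getElem?_getD (l := s) (i := k) (a := true), ← h]
    rfl
  -- Phase 1: forward through the tree
  have tree1 : ∀ k, k ≤ d → ∃ q, w[k]? = some (.node k q) ∧ q * 2 ^ (d - k) < m := by
    intro k
    induction k with
    | zero =>
      intro _
      have hw0 : w[0]? = some root := by
        cases w with
        | nil => simp at hhead
        | cons a l => simpa using hhead
      exact ⟨0, hw0, by simp; omega⟩
    | succ k ih =>
      intro hk
      obtain ⟨q, hq, hqm⟩ := ih (by omega)
      obtain ⟨x, hx⟩ := hsome (k + 1) (by omega)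
      have he := hEdge hq hx
      cases x with
      | node k' q' =>
        obtain ⟨h1, h2, h3, h4⟩ := he
        subst h1
        exact ⟨q', hx, h4⟩
      | u i j => obtain ⟨h1, -⟩ := he; omega
      | v i j => obtain ⟨h1, -⟩ := he; omega
  obtain ⟨p, hp, hpm'⟩ := tree1 d le_rfl
  have hpm : p < m := by simpa using hpm'
  -- Phase 1': backward determination of the tree prefix
  have treeB : ∀ t, t ≤ d → w[d - t]? = some (.node (d - t) (p / 2 ^ t)) := by
    intro t
    induction t with
    | zero => intro _; simpa using hp
    | succ t ih =>
      intro ht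
      have h1 := ih (by omega)
      obtain ⟨a, ha, -⟩ := tree1 (d - (t + 1)) (by omega)
      have hstep : d - (t + 1) + 1 = d - t := by omega
      have h1' : w[d - (t + 1) + 1]? = some (.node (d - t) (p / 2 ^ t)) := by
        rw [hstep]; exact h1
      have he := hEdge ha h1'
      obtain ⟨-, -, h3, -⟩ := he
      have haa : a = p / 2 ^ (t + 1) := by
        have h5 : p / 2 ^ t / 2 = p / 2 ^ (t + 1) := by
          rw [Nat.div_div_eq_div_mul, ← pow_succ]
        rcases h3 with h | h <;> omega
      rw [haa] at ha
      exact ha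
  have treeChar : ∀ k, k ≤ d → w[k]? = some (.node k (p / 2 ^ (d - k))) := by
    intro k hk
    have := treeB (d - k) (by omega)
    rwa [Nat.sub_sub_self hk] at this
  refine ⟨p, hpm, treeChar, ?_⟩
  -- Phase 2: through the gadget
  have step : ∀ j, 1 ≤ j → j ≤ n - 1 →
      w[d + j]? = some (uv (b j) (rowF c b (p + 1) j) j) := by
    intro j hj1
    induction j, hj1 using Nat.le_induction with
    | base =>
      intro _
      have hnode : w[d]? = some (.node d p) := by simpa using treeChar d le_rfl
      obtain ⟨x, hx⟩ := hsome (d + 1) (by omega)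
      have hx' : w[d + 1]? = some x := hx
      have he := hEdge hnode hx'
      have hlx := hbit (d + 1) x hx
      cases x with
      | node k' q' => obtain ⟨h1, h2, -⟩ := he; omega
      | u i j =>
        obtain ⟨-, -, h3, h4⟩ := he
        subst h3; subst h4
        have hbt : b 1 = true := by rw [hb]; simp only [← hlx]; rfl
        rw [hx]
        congr 1
        rw [hbt]
        rfl
      | v i j =>
        obtain ⟨-, -, h3, h4⟩ := he
        subst h3; subst h4
        have hbt : b 1 = false := by rw [hb]; simp only [← hlx]; rfl
        rw [hx]
        congr 1
        rw [hbt]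
        rfl
    | succ j hj ih =>
      intro hjn
      have hcur := ih (by omega)
      obtain ⟨x, hx⟩ := hsome (d + (j + 1)) (by omega)
      have hx2 : w[(d + j) + 1]? = some x := by
        rw [show d + j + 1 = d + (j + 1) by omega]; exact hx
      have he := hEdge hcur hx2
      have hlx := hbit (d + (j + 1)) x hx
      have hbj1 : lab x = b (j + 1) := by rw [hlx, hb]
      have hrow := rowF_succ_of_ne_zero c b (p + 1) j hj
      rcases rowF_cases c b (p + 1) j with hr | hr <;> rw [hr] at hcur he
      · -- row 0 case
        have h2j := (rowF_eq_zero c b (p + 1) (by omega) j hr).1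
        have hrz : rowF c b (p + 1) (j + 1) = 0 := by
          rw [hrow, hr]; split <;> rfl
        rw [hx, hrz]
        cases hbj : b j <;> simp only [uv, if_true, if_false, Bool.false_eq_true] at he hcur ⊢ <;>
        · cases x with
          | node k' q' => rw [hbj] at he; exact he.elim
          | u i' j' =>
            rw [hbj] at he
            obtain ⟨hj', hcase⟩ := he
            have hi' : i' = 0 := by
              rcases hcase with ⟨-, h, -⟩ | ⟨h, -⟩ | ⟨h, -⟩ <;> omega
            have : b (j + 1) = true := by rw [← hbj1]; rfl
            rw [this, hi', hj']
            rfl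
          | v i' j' =>
            rw [hbj] at he
            obtain ⟨hj', hcase⟩ := he
            have hi' : i' = 0 := by
              rcases hcase with ⟨-, h, -⟩ | ⟨h, -⟩ | ⟨h, -⟩ <;> omega
            have : b (j + 1) = false := by rw [← hbj1]; rfl
            rw [this, hi', hj']
            rfl
      · -- row p+1 case
        rw [hx]
        cases hbj : b j <;> simp only [uv, if_true, if_false, Bool.false_eq_true] at he hcur ⊢ <;>
        · cases x with
          | node k' q' => rw [hbj] at he; exact he.elim
          | u i' j' =>
            rw [hbj] at he
            obtain ⟨hj', hcase⟩ := he
            have hlit : b (j + 1) = true := by rw [← hbj1]; rfl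
            have hi' : i' = rowF c b (p + 1) (j + 1) := by
              rw [hrow, hr, hbj]
              rcases hcase with ⟨h, -⟩ | ⟨-, -, h1, -, -, h2⟩ | ⟨-, -, h1, -, -, h2⟩
              · omega
              · rcases h2 with h2 | ⟨h2, -⟩
                · rw [if_pos h2]; omega
                · omega
              · rw [if_neg h2]; omega
            rw [hlit, hi', hj']
            rfl
          | v i' j' =>
            rw [hbj] at he
            obtain ⟨hj', hcase⟩ := he
            have hlit : b (j + 1) = false := by rw [← hbj1]; rfl
            have hi' : i' = rowF c b (p + 1) (j + 1) := by
              rw [hrow, hr, hbj]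
              rcases hcase with ⟨h, -⟩ | ⟨-, -, h1, -, -, h2⟩ | ⟨-, -, h1, -, -, h2⟩
              · omega
              · rcases h2 with h2 | ⟨h2, -⟩
                · rw [if_pos h2]; omega
                · omega
              · rw [if_neg h2]; omega
            rw [hlit, hi', hj']
            rfl
  have hlast : w[d + n]? = some (uv (b n) 0 n) ∧ ∃ j, 1 ≤ j ∧ j ≤ n ∧ c (p + 1) j = some (b j) := by
    -- Last step: level n, and satisfaction
    have hj1 : 1 ≤ n - 1 := by omega
    have hcur := step (n - 1) hj1 le_rfl
    obtain ⟨x, hx⟩ := hsome (d + n) (by omega)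
    have hx2 : w[(d + (n - 1)) + 1]? = some x := by
      rw [show d + (n - 1) + 1 = d + n by omega]; exact hx
    have he := hEdge hcur hx2
    have hlx : lab x = b n := hbit (d + n) x hx
    rcases rowF_cases c b (p + 1) (n - 1) with hr | hr <;> rw [hr] at he
    · -- row 0 at level n-1: satisfied earlier
      obtain ⟨-, j', hja, hjb, hjc⟩ := rowF_eq_zero c b (p + 1) (by omega) (n - 1) hr
      refine ⟨?_, j', hja, by omega, hjc⟩
      rw [hx]
      cases hbj : b (n - 1) <;> simp only [hbj, uv, if_true, if_false, Bool.false_eq_true] at he <;>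
      · cases x with
        | node k' q' => exact he.elim
        | u i' j2 =>
          obtain ⟨hj2, hcase⟩ := he
          have hi' : i' = 0 := by
            rcases hcase with ⟨-, h, -⟩ | ⟨h, -⟩ | ⟨h, -⟩ <;> omega
          have hbn : b n = true := by rw [← hlx]; rfl
          rw [hbn, hi', show j2 = n by omega]
          rfl
        | v i' j2 =>
          obtain ⟨hj2, hcase⟩ := he
          have hi' : i' = 0 := by
            rcases hcase with ⟨-, h, -⟩ | ⟨h, -⟩ | ⟨h, -⟩ <;> omega
          have hbn : b n = false := by rw [← hlx]; rfl
          rw [hbn, hi', show j2 = n by omega]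
          rfl
    · -- row p+1 at level n-1
      cases hbj : b (n - 1) <;> simp only [hbj, uv, if_true, if_false, Bool.false_eq_true] at he <;>
      · cases x with
        | node k' q' => exact he.elim
        | u i' j2 =>
          obtain ⟨hj2, hcase⟩ := he
          have hbn : b n = true := by rw [← hlx]; rfl
          have hkey : i' = 0 ∧ (c (p + 1) (n - 1) = some (b (n - 1)) ∨ c (p + 1) n = some (b n)) := by
            rcases hcase with ⟨h, -⟩ | ⟨-, -, h1, -, -, h2⟩ | ⟨-, -, -, -, h1, -⟩
            · omega
            · refine ⟨h1, ?_⟩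
              rcases h2 with h2 | ⟨-, h2⟩
              · left; rw [hbj]; exact h2
              · right; rw [hbn]; exact h2
            · omega
          refine ⟨?_, ?_⟩
          · rw [hx, hbn, hkey.1, show j2 = n by omega]; rfl
          · rcases hkey.2 with h | h
            · exact ⟨n - 1, by omega, by omega, h⟩
            · exact ⟨n, by omega, le_rfl, h⟩
        | v i' j2 =>
          obtain ⟨hj2, hcase⟩ := he
          have hbn : b n = false := by rw [← hlx]; rfl
          have hkey : i' = 0 ∧ (c (p + 1) (n - 1) = some (b (n - 1)) ∨ c (p + 1) n = some (b n)) := by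
            rcases hcase with ⟨h, -⟩ | ⟨-, -, h1, -, -, h2⟩ | ⟨-, -, -, -, h1, -⟩
            · omega
            · refine ⟨h1, ?_⟩
              rcases h2 with h2 | ⟨-, h2⟩
              · left; rw [hbj]; exact h2
              · right; rw [hbn]; exact h2
            · omega
          refine ⟨?_, ?_⟩
          · rw [hx, hbn, hkey.1, show j2 = n by omega]; rfl
          · rcases hkey.2 with h | h
            · exact ⟨n - 1, by omega, by omega, h⟩
            · exact ⟨n, by omega, le_rfl, h⟩
  exact ⟨step, hlast.1, hlast.2⟩

end GraphDB

namespace GraphDB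


/-- Extract the leaf index from a walk. -/
def leafIdx (d : ℕ) (w : List Vtx) : ℕ :=
  match w[d]? with
  | some (.node _ q) => q
  | _ => 0

theorem leafIdx_eq {d p : ℕ} {w : List Vtx} (hw : w[d]? = some (.node d p)) :
    leafIdx d w = p := by
  simp only [leafIdx, hw]
end GraphDB

namespace GraphDB

/-- if a sequence `s = s_0 s_1 … s_{n+⌈log₂ m⌉} ∈ {0,1}^{n+1+⌈log₂ m⌉}`
satisfies `occ_root^G(s) = m`, then the boolean assignment
`x_j := s_{j+⌈log₂ m⌉}` (for `j = 1, …, n`) satisfies every clause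
`c_1(x), …, c_m(x)`: each clause contains a literal made true by the
assignment. -/
theorem assignment_of_occ_eq_m (n m : ℕ) (hn : 2 ≤ n) (hm : 1 ≤ m)
    (c : ℕ → ℕ → Option Bool)
    (hne : ∀ i, 1 ≤ i → i ≤ m → ∃ j, 1 ≤ j ∧ j ≤ n ∧ c i j ≠ none)
    (s : List Bool) (hlen : s.length = n + 1 + Nat.clog 2 m)
    (hocc : occG n m c root s = m) :
    ∀ i, 1 ≤ i → i ≤ m →
      ∃ j, 1 ≤ j ∧ j ≤ n ∧ c i j = some (s.getD (j + Nat.clog 2 m) true) := by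
  classical
  set d := Nat.clog 2 m with hd
  intro i hi1 him
  by_contra hns
  push_neg at hns
  set S : Set (List Vtx) :=
    {w : List Vtx | List.Chain' (Edge n m c) w ∧ w.head? = some root ∧ w.map lab = s} with hS
  have hSw : ∀ w ∈ S, ∃ p, p < m ∧
      (∀ k, k ≤ d → w[k]? = some (.node k (p / 2 ^ (d - k)))) ∧
      (∀ j, 1 ≤ j → j ≤ n - 1 →
        w[d + j]? = some (uv (s.getD (d + j) true)
          (rowF c (fun j' => s.getD (d + j') true) (p + 1) j) j)) ∧
      w[d + n]? = some (uv (s.getD (d + n) true) 0 n) ∧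
      (∃ j, 1 ≤ j ∧ j ≤ n ∧ c (p + 1) j = some (s.getD (d + j) true)) :=
    fun w hw => walk_struct n m hn hm c s hlen w hw.1 hw.2.1 hw.2.2
  have hlenS : ∀ w ∈ S, w.length = n + 1 + d := by
    intro w hw
    rw [← List.length_map (as := w) lab, hw.2.2, hlen]
  have htreeself : ∀ (w : List Vtx) (p : ℕ),
      (∀ k, k ≤ d → w[k]? = some (.node k (p / 2 ^ (d - k)))) → w[d]? = some (.node d p) := by
    intro w p htree
    have := htree d le_rfl
    rwa [Nat.sub_self, pow_zero, Nat.div_one] at this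
  have h1 : ∀ w ∈ S, leafIdx d w < m ∧ leafIdx d w + 1 ≠ i := by
    intro w hw
    obtain ⟨p, hpm, htree, -, -, hsat⟩ := hSw w hw
    rw [leafIdx_eq (htreeself w p htree)]
    refine ⟨hpm, ?_⟩
    intro hpi
    obtain ⟨j, hj1, hj2, hj3⟩ := hsat
    rw [hpi] at hj3
    exact hns j hj1 hj2 (by rwa [Nat.add_comm j d])
  have hinj : Set.InjOn (leafIdx d) S := by
    intro w hw w' hw' hpq
    obtain ⟨p, hpm, htree, hstep, hlast, -⟩ := hSw w hw
    obtain ⟨p', hpm', htree', hstep', hlast', -⟩ := hSw w' hw'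
    rw [leafIdx_eq (htreeself w p htree), leafIdx_eq (htreeself w' p' htree')] at hpq
    subst hpq
    apply List.ext_getElem?
    intro k
    by_cases hk : k ≤ d
    · rw [htree k hk, htree' k hk]
    · by_cases hk2 : k < n + 1 + d
      · by_cases hj : k - d ≤ n - 1
        · have e1 := hstep (k - d) (by omega) hj
          have e2 := hstep' (k - d) (by omega) hj
          rw [show d + (k - d) = k by omega] at e1 e2
          rw [e1, e2]
        · have hkn : k = d + n := by omega
          rw [hkn, hlast, hlast']
      · rw [List.getElem?_eq_none (by rw [hlenS w hw]; omega),
          List.getElem?_eq_none (by rw [hlenS w' hw']; omega)]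
  have hocc' : S.ncard = m := by
    rw [← hocc]; rfl
  have himg : leafIdx d '' S ⊆ {q : ℕ | q < m ∧ q + 1 ≠ i} := by
    rintro q ⟨w, hw, rfl⟩
    exact h1 w hw
  have hssub : {q : ℕ | q < m ∧ q + 1 ≠ i} ⊂ Set.Iio m := by
    constructor
    · intro q hq; exact hq.1
    · intro hcon
      have : i - 1 ∈ {q : ℕ | q < m ∧ q + 1 ≠ i} := hcon (by simp [Set.mem_Iio]; omega)
      obtain ⟨-, hne'⟩ := this
      omega
  have hIiofin : (Set.Iio m).Finite := Set.finite_Iio m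
  have hcard1 : (leafIdx d '' S).ncard = m := by
    rw [Set.ncard_image_of_injOn hinj, hocc']
  have hcard2 : (leafIdx d '' S).ncard ≤ ({q : ℕ | q < m ∧ q + 1 ≠ i}).ncard :=
    Set.ncard_le_ncard himg (hIiofin.subset hssub.1)
  have hcard3 : ({q : ℕ | q < m ∧ q + 1 ≠ i}).ncard < (Set.Iio m).ncard :=
    Set.ncard_lt_ncard hssub hIiofin
  have hcard4 : (Set.Iio m).ncard = m := by
    rw [← Finset.coe_Iio, Set.ncard_coe_finset, Nat.card_Iio]
  omega

end GraphDB
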